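/- Let G be a finite group and N ⊴ G a normal subgroup of odd order. If the coset Nx is a real element of G/N, then Nx = Ny for some real element y of G. -/

import Mathlib

/-- An element `x` of a group is *real* if it is conjugate to its inverse. -/
def IsRealEl (G : Type*) [Group G] (x : G) : Prop := ∃ g : G, g⁻¹ * x * g = x⁻¹

/-- The size of the conjugacy class of `x` in `G`. -/
noncomputable def clSize (G : Type*) [Group G] (x : G) : ℕ := Nat.card {y : G // IsConj x y}
theorem stmt_12 {G : Type*} [Group G] [Finite G] (N : Subgroup G) [N.Normal]
    (hodd : Odd (Nat.card N)) :
    ∀ x : G, IsRealEl (G ⧸ N) (QuotientGroup.mk x) →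
      ∃ y : G, IsRealEl G y ∧ (QuotientGroup.mk y : G ⧸ N) = QuotientGroup.mk x := by
  intro x hx
  obtain ⟨gb, hgb⟩ := hx
  obtain ⟨g, rfl⟩ := QuotientGroup.mk_surjective gb
  -- the coset Nx as a subtype
  set S := {y : G // (QuotientGroup.mk y : G ⧸ N) = QuotientGroup.mk x} with hSdef
  have hgb' : ((QuotientGroup.mk g : G ⧸ N))⁻¹ * (QuotientGroup.mk x)⁻¹ * QuotientGroup.mk g
      = QuotientGroup.mk x := by
    simpa [mul_inv_rev, mul_assoc] using congrArg Inv.inv hgb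
  have hgb'' : (QuotientGroup.mk g : G ⧸ N) * (QuotientGroup.mk x)⁻¹ * (QuotientGroup.mk g)⁻¹
      = QuotientGroup.mk x := by
    rw [← hgb]; group
  have mem1 : ∀ y : S, (QuotientGroup.mk (g⁻¹ * (y : G)⁻¹ * g) : G ⧸ N) = QuotientGroup.mk x := by
    intro y
    have : (QuotientGroup.mk (g⁻¹ * (y : G)⁻¹ * g) : G ⧸ N)
        = (QuotientGroup.mk g)⁻¹ * (QuotientGroup.mk (y : G))⁻¹ * QuotientGroup.mk g := by
      simp [QuotientGroup.mk_mul, QuotientGroup.mk_inv]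
    rw [this, y.2, hgb']
  have mem2 : ∀ y : S, (QuotientGroup.mk (g * (y : G)⁻¹ * g⁻¹) : G ⧸ N) = QuotientGroup.mk x := by
    intro y
    have : (QuotientGroup.mk (g * (y : G)⁻¹ * g⁻¹) : G ⧸ N)
        = QuotientGroup.mk g * (QuotientGroup.mk (y : G))⁻¹ * (QuotientGroup.mk g)⁻¹ := by
      simp [QuotientGroup.mk_mul, QuotientGroup.mk_inv]
    rw [this, y.2, hgb'']
  let φ : Equiv.Perm S :=
  { toFun := fun y => ⟨g⁻¹ * (y : G)⁻¹ * g, mem1 y⟩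
    invFun := fun y => ⟨g * (y : G)⁻¹ * g⁻¹, mem2 y⟩
    left_inv := by intro y; ext; simp
    right_inv := by intro y; ext; simp }
  -- power formula
  have pow_apply : ∀ (k : ℕ) (y : S), ((φ ^ k) y : G) =
      if Even k then (g ^ k)⁻¹ * (y : G) * g ^ k else (g ^ k)⁻¹ * (y : G)⁻¹ * g ^ k := by
    intro k
    induction k with
    | zero => intro y; simp
    | succ k ih =>
      intro y
      have h1 : (φ ^ (k + 1)) y = φ ((φ ^ k) y) := by
        rw [pow_succ']; rfl
      have h2 : (φ ((φ ^ k) y) : G) = g⁻¹ * (((φ ^ k) y : G))⁻¹ * g := rfl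
      rw [h1, h2, ih y]
      rcases Nat.even_or_odd k with he | ho
      · rw [if_pos he, if_neg (by simp [Nat.even_add_one, he])]
        simp [pow_succ, mul_inv_rev, mul_assoc]
      · rw [if_neg (Nat.not_even_iff_odd.mpr ho),
          if_pos (Nat.even_add_one.mpr (Nat.not_even_iff_odd.mpr ho))]
        simp [pow_succ, mul_inv_rev, mul_assoc]
  -- S is finite with odd cardinality
  haveI : Finite S := Subtype.finite
  have cardS : Nat.card S = Nat.card N := by
    refine Nat.card_congr ⟨fun y => ⟨(y : G)⁻¹ * x, QuotientGroup.eq.mp y.2⟩,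
      fun n => ⟨x * (n : G)⁻¹, ?_⟩, ?_, ?_⟩
    · rw [QuotientGroup.eq]
      simpa [mul_assoc] using n.2
    · intro y; ext; simp [mul_assoc]
    · intro n; ext; simp [mul_assoc]
  have hoddS : Odd (Nat.card S) := cardS ▸ hodd
  -- odd part
  set n := orderOf φ with hn
  have hn0 : n ≠ 0 := (orderOf_pos φ).ne'
  set v := n.factorization 2 with hv
  set m := n / 2 ^ v with hm
  have hmn : 2 ^ v * m = n := Nat.ordProj_mul_ordCompl_eq_self n 2
  have hmodd : Odd m := by
    have := Nat.not_dvd_ordCompl Nat.prime_two hn0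
    exact Nat.odd_iff.mpr (Nat.two_dvd_ne_zero.mp this)
  set τ := φ ^ m with hτ
  have hτpow : τ ^ 2 ^ v = 1 := by
    rw [hτ, ← pow_mul, mul_comm, hmn, hn, pow_orderOf_eq_one]
  -- zpowers τ is a 2-group
  have hP : IsPGroup 2 (Subgroup.zpowers τ) := by
    rintro ⟨h, hh⟩
    obtain ⟨k, hk⟩ := Subgroup.mem_zpowers_iff.mp hh
    have hone : h ^ 2 ^ v = 1 := by
      rw [← hk, ← zpow_natCast (τ ^ k), ← zpow_mul, mul_comm, zpow_mul, zpow_natCast, hτpow,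
        one_zpow]
    refine ⟨v, Subtype.ext ?_⟩
    rw [SubmonoidClass.coe_pow, OneMemClass.coe_one]
    exact hone
  have hfix := hP.nonempty_fixed_point_of_prime_not_dvd_card S
    (by intro hdvd
        rw [Nat.odd_iff] at hoddS
        obtain ⟨c, hc⟩ := hdvd
        omega)
  obtain ⟨y, hy⟩ := hfix
  have hyfix : τ y = y := by
    have := hy ⟨τ, Subgroup.mem_zpowers τ⟩
    simpa [Equiv.Perm.smul_def] using this
  have key : (g ^ m)⁻¹ * (y : G)⁻¹ * g ^ m = (y : G) := by
    have := pow_apply m y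
    rw [if_neg (Nat.not_even_iff_odd.mpr hmodd)] at this
    rw [← this, ← hτ, hyfix]
  refine ⟨(y : G), ⟨g ^ m, ?_⟩, y.2⟩
  simpa [mul_inv_rev, mul_assoc] using congrArg Inv.inv key
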